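/- Let f be a continuous map of a compact real interval into itself admitting a horseshoe: there exist points a, b, c with either f(c) ≤ a = f(a) < b < c ≤ f(b) or f(c) ≥ a = f(a) > b > c ≥ f(b). Then for every rational number ρ with 0 < ρ ≤ 1/2, f has a cycle of over-rotation number ρ. -/

import Mathlib

open Set Function
open scoped Classical

namespace OverRotation

/-- Symbols for itineraries of unimodal maps, ordered `L < C < R` via `Symb.val`. -/
inductive Symb : Type
  | L : Symb
  | C : Symb
  | R : Symb
  deriving DecidableEq

def Symb.val : Symb → ℕ
  | Symb.L => 0
  | Symb.C => 1
  | Symb.R => 2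

/-- `GtA a x y` means `x >_a y`, i.e. `x < y < a` or `a < y < x`. -/
def GtA (a x y : ℝ) : Prop := (x < y ∧ y < a) ∨ (a < y ∧ y < x)

/-- `φ_a(y) = 1` if `y > a`, and `0` otherwise. -/
noncomputable def phiA (a y : ℝ) : ℝ := if a < y then 1 else 0

/-- The (forward) orbit of `x` under `f`. -/
def orbitSet (f : ℝ → ℝ) (x : ℝ) : Set ℝ := Set.range fun k : ℕ => f^[k] x

/-- The number of indices `0 ≤ i < q` at which consecutive displacements along the
orbit of `x` have different signs; for a cycle of over-rotation pair `(p,q)` this is `2p`. -/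
noncomputable def switchCount (f : ℝ → ℝ) (x : ℝ) (q : ℕ) : ℕ :=
  Set.ncard {i : ℕ | i < q ∧ (f^[i+1] x - f^[i] x) * (f^[i+2] x - f^[i+1] x) < 0}

/-- `x` generates a cycle of `f`, lying in `I`, of over-rotation pair `(p, q)`. -/
def IsCycleIn (f : ℝ → ℝ) (I : Set ℝ) (x : ℝ) (p q : ℕ) : Prop :=
  x ∈ I ∧ 2 ≤ q ∧ Function.minimalPeriod f x = q ∧ switchCount f x q = 2 * p

/-- The set of over-rotation numbers of cycles of `f` lying in `I`. -/
def orNumsIn (f : ℝ → ℝ) (I : Set ℝ) : Set ℝ :=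
  {ρ : ℝ | ∃ x p q, IsCycleIn f I x p q ∧ ρ = (p : ℝ) / (q : ℝ)}

/-- `L` is the code of the cycle `P` (with over-rotation number `ρ`, fixed point `a`):
`L` vanishes at the leftmost point of `P` and `L(f y) = L y + ρ - φ_a y` on `P`. -/
def IsCode (f : ℝ → ℝ) (a : ℝ) (P : Set ℝ) (ρ : ℝ) (L : ℝ → ℝ) : Prop :=
  (∃ x₀ ∈ P, (∀ y ∈ P, x₀ ≤ y) ∧ L x₀ = 0) ∧
    ∀ y ∈ P, L (f y) = L y + ρ - phiA a y

/-- A pattern: a cyclic permutation of `{0, …, n-1}`, `n ≥ 2`. -/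
def IsPattern {n : ℕ} (π : Equiv.Perm (Fin n)) : Prop :=
  2 ≤ n ∧ π.IsCycle ∧ ∀ i, π i ≠ i

/-- `f` exhibits the pattern `π` on the cycle `x 0 < x 1 < … < x (n-1)` inside `I`. -/
def ExhibitsOn (f : ℝ → ℝ) (I : Set ℝ) {n : ℕ} (π : Equiv.Perm (Fin n)) (x : Fin n → ℝ) : Prop :=
  (∀ i, x i ∈ I) ∧ StrictMono x ∧ ∀ i, f (x i) = x (π i)

/-- `f` exhibits the pattern `π` on some cycle inside `I`. -/
def Exhibits (f : ℝ → ℝ) (I : Set ℝ) {n : ℕ} (π : Equiv.Perm (Fin n)) : Prop :=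
  ∃ x : Fin n → ℝ, ExhibitsOn f I π x

/-- Pattern `π` forces pattern `θ`: every continuous self-map of a compact interval
having a cycle exhibiting `π` has a cycle exhibiting `θ`. -/
def Forces {m n : ℕ} (π : Equiv.Perm (Fin m)) (θ : Equiv.Perm (Fin n)) : Prop :=
  ∀ (f : ℝ → ℝ) (lo hi : ℝ), lo ≤ hi → ContinuousOn f (Set.Icc lo hi) →
    Set.MapsTo f (Set.Icc lo hi) (Set.Icc lo hi) →
    Exhibits f (Set.Icc lo hi) π → Exhibits f (Set.Icc lo hi) θ

/-- Twice the `p` of the over-rotation pair of the pattern `π`: the number of (spatial)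
positions at which the displacement direction changes at the next step. -/
noncomputable def permSwitchTwice {n : ℕ} (π : Equiv.Perm (Fin n)) : ℕ :=
  Set.ncard {i : Fin n | (i < π i ∧ π (π i) < π i) ∨ (π i < i ∧ π i < π (π i))}

/-- Over-rotation number of a pattern. -/
noncomputable def rotNum {n : ℕ} (π : Equiv.Perm (Fin n)) : ℝ :=
  (permSwitchTwice π : ℝ) / (2 * (n : ℝ))

/-- An over-twist pattern: a pattern forcing no other pattern of the same
over-rotation number. -/
def IsOverTwist {n : ℕ} (π : Equiv.Perm (Fin n)) : Prop :=
  IsPattern π ∧ ∀ (m : ℕ) (θ : Equiv.Perm (Fin m)), IsPattern θ →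
    rotNum θ = rotNum π → Forces π θ → ∃ h : m = n, h ▸ θ = π

/-- `f` is the `P`-linear map of the cycle `x 0 < … < x (n-1)` exhibiting `π`:
it agrees with the pattern on the cycle and is affine on each complementary interval
(and hence continuous on the convex hull of the cycle). -/
def IsPLinear {n : ℕ} (x : Fin n → ℝ) (π : Equiv.Perm (Fin n)) (f : ℝ → ℝ) : Prop :=
  (∀ i, f (x i) = x (π i)) ∧
  (∀ i j : Fin n, (i : ℕ) + 1 = (j : ℕ) → ∀ t : ℝ, t ∈ Set.Icc (0:ℝ) 1 →
    f ((1 - t) * x i + t * x j) = (1 - t) * x (π i) + t * x (π j)) ∧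
  (∀ i j : Fin n, ContinuousOn f (Set.Icc (x i) (x j)))

/-- A unimodal map of `[0,1]` with critical point `c`: continuous, strictly increasing
on `[0,c]`, strictly decreasing on `[c,1]`, with a unique fixed point. -/
def UnimodalMap (f : ℝ → ℝ) (c : ℝ) : Prop :=
  ContinuousOn f (Set.Icc 0 1) ∧ Set.MapsTo f (Set.Icc 0 1) (Set.Icc 0 1) ∧
  c ∈ Set.Icc (0:ℝ) 1 ∧ StrictMonoOn f (Set.Icc 0 c) ∧ StrictAntiOn f (Set.Icc c 1) ∧
  ∃! a, a ∈ Set.Icc (0:ℝ) 1 ∧ f a = a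

/-- A unimodal pattern: increasing up to some index, decreasing afterwards. -/
def UnimodalPattern {n : ℕ} (π : Equiv.Perm (Fin n)) : Prop :=
  ∃ m : Fin n, (∀ i j : Fin n, i < j → j ≤ m → π i < π j) ∧
    (∀ i j : Fin n, m ≤ i → i < j → π j < π i)

/-- The itinerary of `x` with respect to critical point `c`. -/
noncomputable def itin (f : ℝ → ℝ) (c x : ℝ) (j : ℕ) : Symb :=
  if f^[j] x < c then Symb.L else if f^[j] x = c then Symb.C else Symb.R

/-- The kneading sequence of a unimodal map `f` with critical point `c`. -/
noncomputable def kneading (f : ℝ → ℝ) (c : ℝ) : ℕ → Symb := itin f c (f c)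

/-- The number of `R`'s among `A 0, …, A (j-1)` is even. -/
def RParityEven (A : ℕ → Symb) (j : ℕ) : Prop :=
  Even (Set.ncard {i : ℕ | i < j ∧ A i = Symb.R})

/-- The strict kneading (parity-lexicographic) order `A ≻ B` on symbol sequences. -/
def KOgt (A B : ℕ → Symb) : Prop :=
  ∃ j : ℕ, (∀ i < j, A i = B i) ∧
    ((RParityEven A j ∧ (B j).val < (A j).val) ∨ (¬ RParityEven A j ∧ (A j).val < (B j).val))

/-- `A ⪰ B` in the kneading order. -/
def KOge (A B : ℕ → Symb) : Prop := A = B ∨ KOgt A B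

/-- The kneading sequence `ν_{p/q}` of the unimodal over-twist pattern of
over-rotation number `p/q`. -/
def nuRho (p q : ℕ) (n : ℕ) : Symb :=
  if ((n+1) * p) % q = 0 then Symb.C
  else if ((n+1) * p) % q < 2 * p then Symb.R
  else Symb.L

/-- The strongest kneading sequence `ν'_{p/q}` associated with the over-rotation
interval `[p/q, 1/2]`. -/
def nuRho' (p q : ℕ) (n : ℕ) : Symb :=
  let k := if n < q + 2 then n else ((n - 2) % q) + 2
  if k = q - 1 then Symb.L
  else if k = q then Symb.R
  else if k = q + 1 then Symb.R
  else nuRho p q k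

/-- The permutation `π_{p/q}` (0-based): `i ↦ i + p` for `i ≤ q-2p-1`,
`i ↦ 2q-2p-1-i` for `q-2p ≤ i ≤ q-p-1`, and `i ↦ q-1-i` for `i ≥ q-p`. -/
def twistFun (p q i : ℕ) : ℕ :=
  if i + 2 * p < q then i + p
  else if i + p < q then 2 * q - 2 * p - 1 - i
  else q - 1 - i

/-- Strict Sharkovsky ordering `m ≻ₛ n` ("`m` is sharper than `n`"). -/
def SharkGt (m n : ℕ) : Prop :=
  if m / 2 ^ (m.factorization 2) = 1 then n / 2 ^ (n.factorization 2) = 1 ∧ n < m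
  else n / 2 ^ (n.factorization 2) = 1 ∨ m.factorization 2 < n.factorization 2 ∨
    (m.factorization 2 = n.factorization 2 ∧
      m / 2 ^ (m.factorization 2) < n / 2 ^ (n.factorization 2))

/-- Non-strict Sharkovsky ordering, so that `Sh(k) = {n | 0 < n ∧ SharkGe k n}`. -/
def SharkGe (m n : ℕ) : Prop := m = n ∨ SharkGt m n

/-- `f` is piecewise (strictly) monotone on `[lo, hi]`. -/
def PiecewiseMonotoneOn (f : ℝ → ℝ) (lo hi : ℝ) : Prop :=
  ∃ (k : ℕ) (t : ℕ → ℝ), 0 < k ∧ t 0 = lo ∧ t k = hi ∧ (∀ i < k, t i < t (i+1)) ∧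
    ∀ i < k, StrictMonoOn f (Set.Icc (t i) (t (i+1))) ∨ StrictAntiOn f (Set.Icc (t i) (t (i+1)))

/-- The cycle `y 0 < … < y (N-1)` of `g` has a block structure over the pattern `θ`
on `m` blocks of `N/m` consecutive points each. -/
def HasBlockStructure (g : ℝ → ℝ) {N m : ℕ} (y : Fin N → ℝ) (θ : Equiv.Perm (Fin m)) : Prop :=
  m ∣ N ∧ 1 < m ∧ m < N ∧
  ∀ i : Fin N, ∃ (j : Fin N) (b b' : Fin m),
    g (y i) = y j ∧ (b : ℕ) = (i : ℕ) / (N / m) ∧ (b' : ℕ) = (j : ℕ) / (N / m) ∧ θ b = b'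

/-- `LF(p/q)`: the largest rational `l/k` with `l, k` positive, `k < q` and `l/k < p/q`. -/
noncomputable def LFrac (p q : ℕ) : ℝ :=
  sSup {r : ℝ | ∃ l k : ℕ, 0 < l ∧ 0 < k ∧ k < q ∧ (l:ℝ)/(k:ℝ) < (p:ℝ)/(q:ℝ) ∧ r = (l:ℝ)/(k:ℝ)}

end OverRotation

namespace OverRotation

private lemma subcover_aux (g : ℝ → ℝ) {u v α β : ℝ} (hg : ContinuousOn g (Icc u v))
    (hα : α ∈ Icc u v) (hβ : β ∈ Icc u v) (hαβ : α ≤ β) :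
    ∃ s t, s ∈ Icc u v ∧ t ∈ Icc u v ∧ s ≤ t ∧ g '' Icc s t = uIcc (g α) (g β) := by
  have hsubαβ : Icc α β ⊆ Icc u v := Icc_subset_Icc hα.1 hβ.2
  have hgαβ : ContinuousOn g (Icc α β) := hg.mono hsubαβ
  set T : Set ℝ := Icc α β ∩ g ⁻¹' {g β} with hT
  have hTc : IsClosed T := hgαβ.preimage_isClosed_of_isClosed isClosed_Icc isClosed_singleton
  have hTne : T.Nonempty := ⟨β, right_mem_Icc.2 hαβ, rfl⟩
  have hTbd : BddBelow T := (bddBelow_Icc : BddBelow (Icc α β)).mono inter_subset_left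
  set t := sInf T with htdef
  have htT : t ∈ T := hTc.csInf_mem hTne hTbd
  have htle : ∀ y ∈ T, t ≤ y := fun y hy => csInf_le hTbd hy
  have hαt : α ≤ t := htT.1.1
  have htβ : t ≤ β := htT.1.2
  have hgt : g t = g β := htT.2
  set S : Set ℝ := Icc α t ∩ g ⁻¹' {g α} with hS
  have hSsub : Icc α t ⊆ Icc α β := Icc_subset_Icc le_rfl htβ
  have hSc : IsClosed S :=
    (hgαβ.mono hSsub).preimage_isClosed_of_isClosed isClosed_Icc isClosed_singleton
  have hSne : S.Nonempty := ⟨α, left_mem_Icc.2 hαt, rfl⟩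
  have hSbd : BddAbove S := (bddAbove_Icc (a := α) (b := t)).mono inter_subset_left
  set s := sSup S with hsdef
  have hsS : s ∈ S := hSc.csSup_mem hSne hSbd
  have hsle : ∀ y ∈ S, y ≤ s := fun y hy => le_csSup hSbd hy
  have hαs : α ≤ s := hsS.1.1
  have hst : s ≤ t := hsS.1.2
  have hgs : g s = g α := hsS.2
  have hsmem : s ∈ Icc u v := hsubαβ ⟨hαs, hst.trans htβ⟩
  have htmem : t ∈ Icc u v := hsubαβ ⟨hαt, htβ⟩
  refine ⟨s, t, hsmem, htmem, hst, ?_⟩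
  apply Set.Subset.antisymm
  · rintro _ ⟨x, hx, rfl⟩
    have hsx : s ≤ x := hx.1
    have hxt : x ≤ t := hx.2
    have hαx : α ≤ x := hαs.trans hsx
    have hxβ : x ≤ β := hxt.trans htβ
    rw [Set.mem_uIcc]
    rcases le_total (g α) (g β) with hcd | hcd
    · left
      constructor
      · -- g α ≤ g x
        by_contra h
        push_neg at h
        obtain ⟨y, hy, hgy⟩ := intermediate_value_Icc hxt
          (hgαβ.mono (Icc_subset_Icc hαx htβ)) (⟨h.le, by rw [hgt]; exact hcd⟩ :
            g α ∈ Icc (g x) (g t))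
        have hyS : y ∈ S := ⟨⟨hαx.trans hy.1, hy.2⟩, hgy⟩
        have hxs : x = s := le_antisymm (hy.1.trans (hsle y hyS)) hsx
        rw [hxs, hgs] at h
        exact lt_irrefl _ h
      · -- g x ≤ g β
        by_contra h
        push_neg at h
        obtain ⟨y, hy, hgy⟩ := intermediate_value_Icc hsx
          (hgαβ.mono (Icc_subset_Icc hαs hxβ)) (⟨by rw [hgs]; exact hcd, h.le⟩ :
            g β ∈ Icc (g s) (g x))
        have hyT : y ∈ T := ⟨⟨hαs.trans hy.1, hy.2.trans hxβ⟩, hgy⟩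
        have : x = t := le_antisymm hxt (htle y hyT |>.trans hy.2)
        rw [this, hgt] at h
        exact lt_irrefl _ h
    · right
      constructor
      · -- g β ≤ g x
        by_contra h
        push_neg at h
        obtain ⟨y, hy, hgy⟩ := intermediate_value_Icc' hsx
          (hgαβ.mono (Icc_subset_Icc hαs hxβ)) (⟨h.le, by rw [hgs]; exact hcd⟩ :
            g β ∈ Icc (g x) (g s))
        have hyT : y ∈ T := ⟨⟨hαs.trans hy.1, hy.2.trans hxβ⟩, hgy⟩
        have : x = t := le_antisymm hxt (htle y hyT |>.trans hy.2)
        rw [this, hgt] at h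
        exact lt_irrefl _ h
      · -- g x ≤ g α
        by_contra h
        push_neg at h
        obtain ⟨y, hy, hgy⟩ := intermediate_value_Icc' hxt
          (hgαβ.mono (Icc_subset_Icc hαx htβ)) (⟨by rw [hgt]; exact hcd, h.le⟩ :
            g α ∈ Icc (g t) (g x))
        have hyS : y ∈ S := ⟨⟨hαx.trans hy.1, hy.2⟩, hgy⟩
        have hxs : x = s := le_antisymm (hy.1.trans (hsle y hyS)) hsx
        rw [hxs, hgs] at h
        exact lt_irrefl _ h
  · have : uIcc s t = Icc s t := uIcc_of_le hst
    have h2 := intermediate_value_uIcc (f := g) (a := s) (b := t)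
      (by rw [this]; exact hgαβ.mono (Icc_subset_Icc hαs htβ))
    rw [this, hgs, hgt] at h2
    exact h2

private lemma subcover (g : ℝ → ℝ) {u v α β : ℝ} (hg : ContinuousOn g (Icc u v))
    (hα : α ∈ Icc u v) (hβ : β ∈ Icc u v) :
    ∃ s t, s ∈ Icc u v ∧ t ∈ Icc u v ∧ s ≤ t ∧ g '' Icc s t = uIcc (g α) (g β) := by
  rcases le_total α β with h | h
  · exact subcover_aux g hg hα hβ h
  · obtain ⟨s, t, h1, h2, h3, h4⟩ := subcover_aux g hg hβ hα h
    exact ⟨s, t, h1, h2, h3, by rw [h4, uIcc_comm]⟩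

private lemma iter_chain {γ : Type*} (P : γ → Prop) (T : γ → γ → Prop) (x0 : γ) (h0 : P x0)
    (hstep : ∀ x, P x → ∃ y, P y ∧ T x y) :
    ∃ Z : ℕ → γ, Z 0 = x0 ∧ (∀ n, P (Z n)) ∧ ∀ n, T (Z n) (Z (n+1)) := by
  choose g hg1 hg2 using hstep
  let W : ℕ → {x : γ // P x} := fun n =>
    Nat.rec ⟨x0, h0⟩ (fun _ w => ⟨g w.1 w.2, hg1 w.1 w.2⟩) n
  exact ⟨fun n => (W n).1, rfl, fun n => (W n).2, fun n => hg2 (W n).1 (W n).2⟩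

private lemma periodic_mod {γ : Type*} (g : ℕ → γ) (q : ℕ) (hq : 0 < q)
    (h : ∀ i, g (i + q) = g i) : ∀ i, g i = g (i % q) := by
  intro i
  induction i using Nat.strong_induction_on with
  | _ i ih =>
    rcases lt_or_ge i q with hi | hi
    · rw [Nat.mod_eq_of_lt hi]
    · have h1 : i - q + q = i := Nat.sub_add_cancel hi
      have h2 : i - q < i := Nat.sub_lt (lt_of_lt_of_le hq hi) hq
      rw [← h1, h, ih _ h2, Nat.add_mod_right]

private lemma cont_iter (f : ℝ → ℝ) (lo hi : ℝ) (hcont : ContinuousOn f (Icc lo hi)) :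
    ∀ (n : ℕ) (S : Set ℝ), (∀ i < n, f^[i] '' S ⊆ Icc lo hi) → ContinuousOn (f^[n]) S := by
  intro n
  induction n with
  | zero => intro S _; simpa using continuousOn_id
  | succ n ih =>
    intro S hS
    rw [Function.iterate_succ']
    refine ContinuousOn.comp hcont (ih S fun i hi => hS i (Nat.lt_succ_of_lt hi)) ?_
    intro x hx
    exact hS n (Nat.lt_succ_self n) ⟨x, hx, rfl⟩

private lemma chain_lemma (f : ℝ → ℝ) (lo hi : ℝ) (hcont : ContinuousOn f (Icc lo hi))
    (lA rA : ℕ → ℝ) (hlr : ∀ i, lA i ≤ rA i) (hsub : ∀ i, Icc (lA i) (rA i) ⊆ Icc lo hi)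
    (hcov : ∀ i, (∃ α ∈ Icc (lA i) (rA i), f α = lA (i+1)) ∧
      (∃ β ∈ Icc (lA i) (rA i), f β = rA (i+1)))
    (q : ℕ) (hq : 0 < q) (hperl : ∀ i, lA (i + q) = lA i) (hperr : ∀ i, rA (i + q) = rA i) :
    ∃ x, f^[q] x = x ∧ ∀ i, f^[i] x ∈ Icc (lA i) (rA i) := by
  -- inductive construction of nested intervals
  have main : ∀ n : ℕ, ∃ u v : ℝ, u ≤ v ∧
      (∀ i ≤ n, f^[i] '' Icc u v ⊆ Icc (lA i) (rA i)) ∧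
      f^[n] '' Icc u v = Icc (lA n) (rA n) := by
    intro n
    induction n with
    | zero =>
      refine ⟨lA 0, rA 0, hlr 0, ?_, by simp⟩
      intro i hi
      interval_cases i
      simp
    | succ n ih =>
      obtain ⟨u, v, huv, hinv, heq⟩ := ih
      have hcg : ContinuousOn (f^[n+1]) (Icc u v) :=
        cont_iter f lo hi hcont (n+1) (Icc u v)
          (fun i hi => (hinv i (Nat.lt_succ_iff.mp hi)).trans (hsub i))
      obtain ⟨⟨αn, hαn, hfαn⟩, ⟨βn, hβn, hfβn⟩⟩ := hcov n
      have hαn' : αn ∈ f^[n] '' Icc u v := heq ▸ hαn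
      have hβn' : βn ∈ f^[n] '' Icc u v := heq ▸ hβn
      obtain ⟨α', hα'mem, hα'⟩ := hαn'
      obtain ⟨β', hβ'mem, hβ'⟩ := hβn'
      have hgα : f^[n+1] α' = lA (n+1) := by
        rw [Function.iterate_succ_apply', hα', hfαn]
      have hgβ : f^[n+1] β' = rA (n+1) := by
        rw [Function.iterate_succ_apply', hβ', hfβn]
      obtain ⟨s, t, hs, ht, hst, himg⟩ := subcover (f^[n+1]) hcg hα'mem hβ'mem
      rw [hgα, hgβ, uIcc_of_le (hlr (n+1))] at himg
      have hsubuv : Icc s t ⊆ Icc u v := fun x hx => ⟨hs.1.trans hx.1, hx.2.trans ht.2⟩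
      refine ⟨s, t, hst, ?_, himg⟩
      intro i hi
      rcases Nat.lt_succ_iff_lt_or_eq.mp (Nat.lt_succ_of_le hi) with hi' | hi'
      · exact (Set.image_mono hsubuv).trans (hinv i (Nat.lt_succ_iff.mp hi'))
      · rw [hi']; rw [himg]
  obtain ⟨u, v, huv, hinv, heq⟩ := main q
  have hq0l : lA q = lA 0 := by simpa using hperl 0
  have hq0r : rA q = rA 0 := by simpa using hperr 0
  rw [hq0l, hq0r] at heq
  have hsub0 : Icc u v ⊆ Icc (lA 0) (rA 0) := by
    have := hinv 0 (Nat.zero_le q); simpa using this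
  have hu : u ∈ f^[q] '' Icc u v := by
    rw [heq]; exact hsub0 (left_mem_Icc.2 huv)
  have hv : v ∈ f^[q] '' Icc u v := by
    rw [heq]; exact hsub0 (right_mem_Icc.2 huv)
  obtain ⟨su, hsu, hfsu⟩ := hu
  obtain ⟨sv, hsv, hfsv⟩ := hv
  have hcq : ContinuousOn (f^[q]) (Icc u v) :=
    cont_iter f lo hi hcont q (Icc u v) (fun i hi => (hinv i hi.le).trans (hsub i))
  have hch : ContinuousOn (fun x => f^[q] x - x) (Icc u v) := hcq.sub continuousOn_id
  have hsubu : uIcc su sv ⊆ Icc u v := Set.uIcc_subset_Icc hsu hsv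
  have h0mem : (0:ℝ) ∈ uIcc (f^[q] su - su) (f^[q] sv - sv) := by
    rw [Set.mem_uIcc]
    left
    constructor
    · rw [hfsu]; linarith [hsu.1]
    · rw [hfsv]; linarith [hsv.2]
  obtain ⟨x, hxmem, hx0⟩ := intermediate_value_uIcc (hch.mono hsubu) h0mem
  have hxuv : x ∈ Icc u v := hsubu hxmem
  have hfix : f^[q] x = x := by
    have : f^[q] x - x = 0 := hx0
    linarith [this]
  refine ⟨x, hfix, ?_⟩
  intro i
  have hiter : ∀ j, f^[j] x = f^[j % q] x := by
    refine periodic_mod (fun j => f^[j] x) q hq (fun j => ?_)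
    show f^[j + q] x = f^[j] x
    rw [Function.iterate_add_apply, hfix]
  have hlam : ∀ j, lA j = lA (j % q) := periodic_mod lA q hq hperl
  have hram : ∀ j, rA j = rA (j % q) := periodic_mod rA q hq hperr
  rw [hiter i, hlam i, hram i]
  exact hinv (i % q) (Nat.mod_lt i hq).le ⟨x, hxuv, rfl⟩

private lemma count_periodic (P : ℕ → Prop) (d : ℕ)
    (hP : ∀ i, P (i + d) ↔ P i) :
    ∀ k, ((Finset.range (d*k)).filter P).card = k * ((Finset.range d).filter P).card := by
  have hshift : ∀ (j y : ℕ), P (d * j + y) ↔ P y := by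
    intro j
    induction j with
    | zero => simp
    | succ j ih =>
      intro y
      have : d * (j+1) + y = (d * j + y) + d := by ring
      rw [this, hP, ih]
  intro k
  induction k with
  | zero => simp
  | succ k ih =>
    have hr : d * (k+1) = d * k + d := by ring
    rw [hr, Finset.range_add, Finset.filter_union, Finset.card_union_of_disjoint, ih,
      Finset.filter_map, Finset.card_map]
    · have : Finset.filter (P ∘ (addLeftEmbedding (d*k))) (Finset.range d)
          = Finset.filter P (Finset.range d) := by
        apply Finset.filter_congr
        intro y _
        simp only [Function.comp, addLeftEmbedding_apply]
        exact hshift k y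
      rw [this]; ring
    · rw [Finset.disjoint_left]
      intro x hx hx2
      simp only [Finset.mem_filter, Finset.mem_range, Finset.mem_map,
        addLeftEmbedding_apply] at hx hx2
      obtain ⟨⟨y, hy, hyx⟩, _⟩ := hx2
      omega

private lemma count_odd_window (m p q : ℕ) (hq : q = m + 2*p) :
    ((Finset.range q).filter (fun i => m < i ∧ (i - m) % 2 = 1)).card = p := by
  have himg : (Finset.range q).filter (fun i => m < i ∧ (i - m) % 2 = 1)
      = (Finset.range p).image (fun j => m + 1 + 2*j) := by
    ext i
    simp only [Finset.mem_filter, Finset.mem_range, Finset.mem_image]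
    constructor
    · rintro ⟨h1, h2, h3⟩
      exact ⟨(i - m - 1)/2, by omega, by omega⟩
    · rintro ⟨j, hj, rfl⟩
      omega
  rw [himg, Finset.card_image_of_injective _ (fun j1 j2 h => by omega), Finset.card_range]

private lemma case1 (f : ℝ → ℝ) (lo hi : ℝ)
    (hcont : ContinuousOn f (Icc lo hi))
    (a b c : ℝ) (ha : a ∈ Icc lo hi) (hc : c ∈ Icc lo hi)
    (h1 : f c ≤ a) (h2 : f a = a) (h3 : a < b) (h4 : b < c) (h5 : c ≤ f b)
    (p q : ℕ) (hp : 0 < p) (hpq : 2*p ≤ q) (hco : Nat.Coprime p q) :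
    ∃ x, IsCycleIn f (Icc lo hi) x p q := by
  have hq0 : 0 < q := by omega
  have hq2 : 2 ≤ q := by omega
  have hab : a ≤ b := h3.le
  have hbc : b ≤ c := h4.le
  have hbhi : b ≤ hi := hbc.trans hc.2
  have hblo : lo ≤ b := ha.1.trans hab
  have hsubac : Icc a c ⊆ Icc lo hi := Icc_subset_Icc ha.1 hc.2
  have hcontab : ContinuousOn f (Icc a b) := hcont.mono (Icc_subset_Icc ha.1 hbhi)
  have hcontbc : ContinuousOn f (Icc b c) := hcont.mono (Icc_subset_Icc hblo hc.2)
  -- the staircase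
  obtain ⟨w0, hw0mem, hfw0⟩ : ∃ w0 ∈ Icc a b, f w0 = c := by
    have : c ∈ Icc (f a) (f b) := ⟨by rw [h2]; exact (h3.trans h4).le, h5⟩
    obtain ⟨w0, hmem, hf⟩ := intermediate_value_Icc hab hcontab this
    exact ⟨w0, hmem, hf⟩
  set P : ℝ → Prop := fun x => a < x ∧ x ≤ b ∧ x < f x with hPdef
  have hP0 : P w0 := by
    refine ⟨lt_of_le_of_ne hw0mem.1 ?_, hw0mem.2, ?_⟩
    · intro h; rw [← h, h2] at hfw0; exact absurd hfw0 (ne_of_lt (h3.trans h4))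
    · rw [hfw0]; exact lt_of_le_of_lt hw0mem.2 h4
  have hstep : ∀ x, P x → ∃ y, P y ∧ (f y = x ∧ y < x) := by
    intro x hx
    obtain ⟨hax, hxb, hxfx⟩ := hx
    have hcontax : ContinuousOn f (Icc a x) :=
      hcont.mono (Icc_subset_Icc ha.1 (hxb.trans hbhi))
    have : x ∈ Icc (f a) (f x) := ⟨by rw [h2]; exact hax.le, hxfx.le⟩
    obtain ⟨y, hymem, hfy⟩ := intermediate_value_Icc hax.le hcontax this
    have hay : a < y := lt_of_le_of_ne hymem.1
      (by intro h; rw [← h, h2] at hfy; exact absurd hfy (ne_of_lt hax))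
    have hyx : y < x := lt_of_le_of_ne hymem.2
      (by intro h; rw [h] at hfy; exact absurd hfy (ne_of_gt hxfx))
    exact ⟨y, ⟨hay, hyx.le.trans hxb, by rw [hfy]; exact hyx⟩, hfy, hyx⟩
  obtain ⟨w, hw0eq, hwP, hwstep⟩ := iter_chain P (fun x y => f y = x ∧ y < x) w0 hP0 hstep
  have hwa : ∀ n, a < w n := fun n => (hwP n).1
  have hwb : ∀ n, w n ≤ b := fun n => (hwP n).2.1
  have hwf : ∀ n, f (w (n+1)) = w n := fun n => (hwstep n).1
  have hfw0c : f (w 0) = c := by rw [hw0eq]; exact hfw0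
  have wanti : StrictAnti w := strictAnti_nat_of_succ_lt (fun n => (hwstep n).2)
  set m : ℕ := q - 2*p with hmdef
  have hmq : m + 2*p = q := by omega
  -- the intervals
  set L : ℕ → ℝ := fun i =>
    if i % q ≤ m then w (m + 1 - i % q) else if (i % q - m) % 2 = 1 then b else w 1 with hLdef
  set R : ℕ → ℝ := fun i =>
    if i % q ≤ m then w (m - i % q) else if (i % q - m) % 2 = 1 then c else w 0 with hRdef
  have hwmono : ∀ i j : ℕ, i ≤ j → w j ≤ w i := fun i j h => wanti.antitone h
  have hlr : ∀ i, L i ≤ R i := by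
    intro i
    simp only [hLdef, hRdef]
    split_ifs with h1' h2'
    · exact hwmono _ _ (by omega)
    · exact hbc
    · exact hwmono _ _ (by omega)
  have hsub : ∀ i, Icc (L i) (R i) ⊆ Icc lo hi := by
    intro i
    refine (Icc_subset_Icc ?_ ?_).trans hsubac
    · simp only [hLdef]; split_ifs
      · exact (hwa _).le
      · exact hab
      · exact (hwa _).le
    · simp only [hRdef]; split_ifs
      · exact (hwb _).trans hbc
      · exact le_rfl
      · exact (hwb _).trans hbc
  have hperl : ∀ i, L (i + q) = L i := by intro i; simp only [hLdef, Nat.add_mod_right]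
  have hperr : ∀ i, R (i + q) = R i := by intro i; simp only [hRdef, Nat.add_mod_right]
  -- covering helpers
  have hJpre : ∀ k, ∃ α ∈ Icc b c, f α = w k := by
    intro k
    have : w k ∈ Icc (f c) (f b) :=
      ⟨h1.trans (hwa k).le, (hwb k).trans (hbc.trans h5)⟩
    obtain ⟨α, hα, hfα⟩ := intermediate_value_Icc' hbc hcontbc this
    exact ⟨α, hα, hfα⟩
  have hB1b : ∃ α ∈ Icc (w 1) (w 0), f α = b := by
    have hcontw : ContinuousOn f (Icc (w 1) (w 0)) :=
      hcont.mono (Icc_subset_Icc ((hwa 1).le.trans' ha.1) ((hwb 0).trans hbhi))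
    have : b ∈ Icc (f (w 1)) (f (w 0)) := by
      rw [hwf 0, hfw0c]; exact ⟨hwb 0, hbc⟩
    obtain ⟨α, hα, hfα⟩ := intermediate_value_Icc (hwmono 0 1 (by omega)) hcontw this
    exact ⟨α, hα, hfα⟩
  have hmodsucc : ∀ i : ℕ, (i + 1) % q = if i % q + 1 = q then 0 else i % q + 1 := by
    intro i
    have h1q : (1 : ℕ) % q = 1 := Nat.mod_eq_of_lt (by omega)
    have hiq : i % q < q := Nat.mod_lt i hq0
    rw [Nat.add_mod, h1q]
    rcases eq_or_ne (i % q + 1) q with h | h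
    · rw [if_pos h, h, Nat.mod_self]
    · rw [if_neg h, Nat.mod_eq_of_lt (by omega)]
  -- evaluation lemmas for L and R
  have hLstair : ∀ i : ℕ, i % q ≤ m → L i = w (m + 1 - i % q) := by
    intro i h; simp only [hLdef]; rw [if_pos h]
  have hRstair : ∀ i : ℕ, i % q ≤ m → R i = w (m - i % q) := by
    intro i h; simp only [hRdef]; rw [if_pos h]
  have hLJ : ∀ i : ℕ, m < i % q → (i % q - m) % 2 = 1 → L i = b := by
    intro i h h'; simp only [hLdef]; rw [if_neg (by omega), if_pos h']
  have hRJ : ∀ i : ℕ, m < i % q → (i % q - m) % 2 = 1 → R i = c := by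
    intro i h h'; simp only [hRdef]; rw [if_neg (by omega), if_pos h']
  have hLB : ∀ i : ℕ, m < i % q → (i % q - m) % 2 ≠ 1 → L i = w 1 := by
    intro i h h'; simp only [hLdef]; rw [if_neg (by omega), if_neg h']
  have hRB : ∀ i : ℕ, m < i % q → (i % q - m) % 2 ≠ 1 → R i = w 0 := by
    intro i h h'; simp only [hRdef]; rw [if_neg (by omega), if_neg h']
  have hcov : ∀ i, (∃ α ∈ Icc (L i) (R i), f α = L (i+1)) ∧
      (∃ β ∈ Icc (L i) (R i), f β = R (i+1)) := by
    intro i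
    have hiq : i % q < q := Nat.mod_lt i hq0
    have hi1q : (i+1) % q < q := Nat.mod_lt (i+1) hq0
    rcases Nat.lt_or_ge (i % q) m with hcase | hcase
    · -- staircase step
      have hsucc : (i+1) % q = i % q + 1 := by rw [hmodsucc i, if_neg (by omega)]
      have hLi := hLstair i (by omega)
      have hRi := hRstair i (by omega)
      have hLi1 : L (i+1) = w (m - i % q) := by
        rw [hLstair (i+1) (by omega), hsucc, show m + 1 - (i % q + 1) = m - i % q by omega]
      have hRi1 : R (i+1) = w (m - (i % q + 1)) := by
        rw [hRstair (i+1) (by omega), hsucc]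
      constructor
      · refine ⟨L i, left_mem_Icc.2 (hlr i), ?_⟩
        rw [hLi, hLi1, show m + 1 - i % q = (m - i % q) + 1 by omega]
        exact hwf _
      · refine ⟨R i, right_mem_Icc.2 (hlr i), ?_⟩
        rw [hRi, hRi1, show m - i % q = (m - (i % q + 1)) + 1 by omega]
        exact hwf _
    · rcases Nat.lt_or_ge m (i % q) with hcase2 | hcase2
      · rcases Nat.decEq ((i % q - m) % 2) 1 with hpar | hpar
        · -- non-J tail position (B1) -> J
          have hLi := hLB i hcase2 hpar
          have hRi := hRB i hcase2 hpar
          have hsucc : (i+1) % q = i % q + 1 := by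
            rw [hmodsucc i, if_neg (by omega)]
          have hLi1 : L (i+1) = b := hLJ (i+1) (by omega) (by omega)
          have hRi1 : R (i+1) = c := hRJ (i+1) (by omega) (by omega)
          constructor
          · obtain ⟨α, hα, hfα⟩ := hB1b
            exact ⟨α, by rw [hLi, hRi]; exact hα, by rw [hLi1]; exact hfα⟩
          · refine ⟨w 0, by rw [hLi, hRi]; exact right_mem_Icc.2 (hwmono 0 1 (by omega)), ?_⟩
            rw [hRi1]; exact hfw0c
        · -- J position
          have hLi := hLJ i hcase2 hpar
          have hRi := hRJ i hcase2 hpar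
          rcases eq_or_ne (i % q + 1) q with hwrap | hwrap
          · have hsucc : (i+1) % q = 0 := by rw [hmodsucc i, if_pos hwrap]
            have hLi1 : L (i+1) = w (m + 1) := by
              rw [hLstair (i+1) (by omega), hsucc, show m + 1 - 0 = m + 1 by omega]
            have hRi1 : R (i+1) = w m := by
              rw [hRstair (i+1) (by omega), hsucc, show m - 0 = m by omega]
            constructor
            · obtain ⟨α, hα, hfα⟩ := hJpre (m+1)
              exact ⟨α, by rw [hLi, hRi]; exact hα, by rw [hLi1]; exact hfα⟩
            · obtain ⟨β, hβ, hfβ⟩ := hJpre m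
              exact ⟨β, by rw [hLi, hRi]; exact hβ, by rw [hRi1]; exact hfβ⟩
          · have hsucc : (i+1) % q = i % q + 1 := by rw [hmodsucc i, if_neg hwrap]
            have hLi1 : L (i+1) = w 1 := hLB (i+1) (by omega) (by omega)
            have hRi1 : R (i+1) = w 0 := hRB (i+1) (by omega) (by omega)
            constructor
            · obtain ⟨α, hα, hfα⟩ := hJpre 1
              exact ⟨α, by rw [hLi, hRi]; exact hα, by rw [hLi1]; exact hfα⟩
            · obtain ⟨β, hβ, hfβ⟩ := hJpre 0
              exact ⟨β, by rw [hLi, hRi]; exact hβ, by rw [hRi1]; exact hfβ⟩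
      · -- i % q = m : B1 -> J
        have hm' : i % q = m := by omega
        have hLi : L i = w 1 := by
          rw [hLstair i (by omega), hm', show m + 1 - m = 1 by omega]
        have hRi : R i = w 0 := by
          rw [hRstair i (by omega), hm', show m - m = 0 by omega]
        have hsucc : (i+1) % q = m + 1 := by
          rw [hmodsucc i, if_neg (by omega), hm']
        have hLi1 : L (i+1) = b := hLJ (i+1) (by omega) (by omega)
        have hRi1 : R (i+1) = c := hRJ (i+1) (by omega) (by omega)
        constructor
        · obtain ⟨α, hα, hfα⟩ := hB1b
          exact ⟨α, by rw [hLi, hRi]; exact hα, by rw [hLi1]; exact hfα⟩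
        · refine ⟨w 0, by rw [hLi, hRi]; exact right_mem_Icc.2 (hwmono 0 1 (by omega)), ?_⟩
          rw [hRi1]; exact hfw0c
  obtain ⟨x, hfix, hmem⟩ := chain_lemma f lo hi hcont L R hlr hsub hcov q hq0 hperl hperr
  have hstepx : ∀ i : ℕ, f^[i+1] x = f (f^[i] x) := fun i => Function.iterate_succ_apply' f i x
  set JP : ℕ → Prop := fun i => m < i % q ∧ (i % q - m) % 2 = 1 with hJPdef
  have hsign : ∀ i : ℕ, (JP i → f^[i+1] x - f^[i] x < 0) ∧
      (¬ JP i → 0 < f^[i+1] x - f^[i] x) := by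
    intro i
    have hiq : i % q < q := Nat.mod_lt i hq0
    have hmemi := hmem i
    have hmemi1 := hmem (i+1)
    constructor
    · rintro ⟨hJ1, hJ2⟩
      rw [hLJ i hJ1 hJ2, hRJ i hJ1 hJ2] at hmemi
      have hnext : f^[i+1] x ≤ w 0 := by
        rcases eq_or_ne (i % q + 1) q with hwrap | hwrap
        · have hsucc : (i+1) % q = 0 := by rw [hmodsucc i, if_pos hwrap]
          have h' := hmemi1.2
          rw [hRstair (i+1) (by omega), hsucc, show m - 0 = m by omega] at h'
          exact h'.trans (hwmono 0 m (by omega))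
        · have hsucc : (i+1) % q = i % q + 1 := by rw [hmodsucc i, if_neg hwrap]
          have h' := hmemi1.2
          rw [hRB (i+1) (by omega) (by omega)] at h'
          exact h'
      rcases lt_or_eq_of_le hmemi.1 with hby | hby
      · have : f^[i+1] x ≤ b := hnext.trans (hwb 0)
        linarith
      · have hfb : f^[i+1] x = f b := by rw [hstepx i, ← hby]
        have hcb : c ≤ f^[i+1] x := by rw [hfb]; exact h5
        have : f^[i+1] x ≤ b := hnext.trans (hwb 0)
        linarith
    · intro hJ
      have hJ' : ¬ (m < i % q ∧ (i % q - m) % 2 = 1) := hJ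
      by_cases hcase : i % q < m
      · -- staircase
        have hRi := hRstair i (by omega)
        have hsucc : (i+1) % q = i % q + 1 := by rw [hmodsucc i, if_neg (by omega)]
        have hLi1 : L (i+1) = w (m - i % q) := by
          rw [hLstair (i+1) (by omega), hsucc, show m + 1 - (i % q + 1) = m - i % q by omega]
        have hub : f^[i] x ≤ w (m - i % q) := by
          have h' := hmemi.2; rw [hRi] at h'; exact h'
        have hlb : w (m - i % q) ≤ f^[i+1] x := by
          have h' := hmemi1.1; rw [hLi1] at h'; exact h'
        rcases lt_or_eq_of_le hub with h | h
        · linarith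
        · have hidx : m - i % q = (m - i % q - 1) + 1 := by omega
          have hval : f^[i+1] x = w (m - i % q - 1) := by
            rw [hstepx i, h, hidx]; exact hwf _
          have hlt : w (m - i % q) < w (m - i % q - 1) := wanti (by omega)
          rw [← hval, ← h] at hlt
          linarith
      · -- B1-type position
        have hRi : R i = w 0 := by
          rcases Nat.lt_or_ge m (i % q) with h' | h'
          · exact hRB i h' (fun hh => hJ' ⟨h', hh⟩)
          · have hieq : i % q = m := by omega
            rw [hRstair i (by omega), hieq, show m - m = 0 by omega]
        have hub : f^[i] x ≤ w 0 := by have h' := hmemi.2; rw [hRi] at h'; exact h'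
        have hne : i % q + 1 ≠ q := by
          intro hh
          exact hJ' ⟨by omega, by omega⟩
        have hsucc : (i+1) % q = i % q + 1 := by rw [hmodsucc i, if_neg hne]
        have hLi1 : L (i+1) = b := by
          refine hLJ (i+1) (by omega) ?_
          rw [hsucc]
          omega
        have hlb : b ≤ f^[i+1] x := by have h' := hmemi1.1; rw [hLi1] at h'; exact h'
        rcases lt_or_eq_of_le hub with h | h
        · have := hwb 0; linarith
        · have hval : f^[i+1] x = c := by rw [hstepx i, h, hfw0c]
          have := hwb 0
          rw [hval, h]
          linarith
  have hJPchar : ∀ i, JP i ↔ f^[i+1] x - f^[i] x < 0 := by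
    intro i
    constructor
    · exact (hsign i).1
    · intro h
      by_contra hJ
      have := (hsign i).2 hJ
      linarith
  have hJPlt : ∀ j, j < q → (JP j ↔ (m < j ∧ (j - m) % 2 = 1)) := by
    intro j hj
    simp only [hJPdef]
    rw [Nat.mod_eq_of_lt hj]
  -- the switch set is exactly [m, q)
  have hset : {i : ℕ | i < q ∧ (f^[i+1] x - f^[i] x) * (f^[i+2] x - f^[i+1] x) < 0}
      = Set.Ico m q := by
    ext i
    simp only [Set.mem_setOf_eq, Set.mem_Ico]
    have hshift : f^[i+1+1] x = f^[i+2] x := rfl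
    constructor
    · rintro ⟨hiq', hprod⟩
      refine ⟨?_, hiq'⟩
      by_contra hmi
      push_neg at hmi
      have hJi : ¬ JP i := by
        rw [hJPlt i hiq']; omega
      have hJi1 : ¬ JP (i+1) := by
        rw [hJPlt (i+1) (by omega)]; omega
      have p1 := (hsign i).2 hJi
      have p2 := (hsign (i+1)).2 hJi1
      rw [hshift] at p2
      nlinarith
    · rintro ⟨hmi, hiq'⟩
      rcases eq_or_ne i (q-1) with hlast | hlast
      · have hJi : JP i := by
          rw [hJPlt i hiq']; omega
        have hJi1 : ¬ JP (i+1) := by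
          simp only [hJPdef]
          rw [show i + 1 = q by omega, Nat.mod_self]
          omega
        have n1 := (hsign i).1 hJi
        have p2 := (hsign (i+1)).2 hJi1
        rw [hshift] at p2
        exact ⟨hiq', mul_neg_of_neg_of_pos n1 p2⟩
      · rcases eq_or_ne i m with him | him
        · have hJi : ¬ JP i := by rw [hJPlt i hiq']; omega
          have hJi1 : JP (i+1) := by rw [hJPlt (i+1) (by omega)]; omega
          have p1 := (hsign i).2 hJi
          have n2 := (hsign (i+1)).1 hJi1
          rw [hshift] at n2
          exact ⟨hiq', mul_neg_of_pos_of_neg p1 n2⟩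
        · rcases Nat.even_or_odd (i - m) with hpar | hpar
          · have hJi : ¬ JP i := by
              rw [hJPlt i hiq']
              rcases hpar with ⟨k, hk⟩
              omega
            have hJi1 : JP (i+1) := by
              rw [hJPlt (i+1) (by omega)]
              rcases hpar with ⟨k, hk⟩
              omega
            have p1 := (hsign i).2 hJi
            have n2 := (hsign (i+1)).1 hJi1
            rw [hshift] at n2
            exact ⟨hiq', mul_neg_of_pos_of_neg p1 n2⟩
          · have hJi : JP i := by
              rw [hJPlt i hiq']
              rcases hpar with ⟨k, hk⟩
              omega
            have hJi1 : ¬ JP (i+1) := by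
              rw [hJPlt (i+1) (by omega)]
              rcases hpar with ⟨k, hk⟩
              omega
            have n1 := (hsign i).1 hJi
            have p2 := (hsign (i+1)).2 hJi1
            rw [hshift] at p2
            exact ⟨hiq', mul_neg_of_neg_of_pos n1 p2⟩
  have hsc : switchCount f x q = 2 * p := by
    rw [switchCount, hset, ← Finset.coe_Ico, Set.ncard_coe_finset, Nat.card_Ico]
    omega
  -- minimal period is exactly q
  have hperpt : Function.IsPeriodicPt f q x := hfix
  have hdpos : 0 < Function.minimalPeriod f x := hperpt.minimalPeriod_pos hq0
  have hddvd : Function.minimalPeriod f x ∣ q := hperpt.minimalPeriod_dvd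
  set d := Function.minimalPeriod f x with hddef
  have hfd : f^[d] x = x := Function.isPeriodicPt_minimalPeriod f x
  have hDd : ∀ j, f^[j + d] x = f^[j] x := fun j => by
    rw [Function.iterate_add_apply, hfd]
  have hJPper : ∀ i, JP (i + d) ↔ JP i := by
    intro i
    rw [hJPchar, hJPchar]
    have e1 : f^[(i+d)+1] x = f^[i+1] x := by
      rw [show (i+d)+1 = (i+1)+d by omega]; exact hDd (i+1)
    rw [e1, hDd i]
  have hcount1 : ((Finset.range q).filter JP).card = p := by
    have : (Finset.range q).filter JP
        = (Finset.range q).filter (fun i => m < i ∧ (i - m) % 2 = 1) := by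
      apply Finset.filter_congr
      intro i hi
      simp only [Finset.mem_range] at hi
      simp only [hJPdef, Nat.mod_eq_of_lt hi]
    rw [this, count_odd_window m p q (by omega)]
  have hcc := count_periodic JP d hJPper (q / d)
  rw [Nat.mul_div_cancel' hddvd] at hcc
  have hdvd1 : (q / d) ∣ p := by
    have hinst : ∀ (h1 h2 : DecidablePred JP) (s : Finset ℕ),
        (@Finset.filter ℕ JP h1 s).card = (@Finset.filter ℕ JP h2 s).card := by
      intro h1 h2 s
      have : h1 = h2 := funext fun a => Subsingleton.elim _ _
      rw [this]
    have hcount1' := (hinst (fun a => Classical.propDecidable (JP a)) _ (Finset.range q)).trans hcount1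
    exact ⟨_, hcount1'.symm.trans hcc⟩
  have hdvd2 : (q / d) ∣ q := Nat.div_dvd_of_dvd hddvd
  have hdvdg : (q / d) ∣ Nat.gcd p q := Nat.dvd_gcd hdvd1 hdvd2
  have hgcd : Nat.gcd p q = 1 := hco
  rw [hgcd, Nat.dvd_one] at hdvdg
  have hdq : d = q := by
    have := Nat.mul_div_cancel' hddvd
    rw [hdvdg] at this
    omega
  have hx0 : x ∈ Icc lo hi := by
    have h0 := hmem 0
    simp only [Function.iterate_zero, id_eq] at h0
    exact hsub 0 h0
  exact ⟨x, hx0, hq2, hdq, hsc⟩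


/-- If a continuous interval map `f` has a horseshoe (points `a, b, c` with
`f c ≤ a = f a < b < c ≤ f b` or `f c ≥ a = f a > b > c ≥ f b`), then for every rational
`ρ` with `0 < ρ ≤ 1/2`, `f` has a cycle of over-rotation number `ρ`. -/
theorem horseshoe_gives_all_rotation_numbers (f : ℝ → ℝ) (lo hi : ℝ) (hle : lo ≤ hi)
    (hcont : ContinuousOn f (Set.Icc lo hi))
    (hmaps : Set.MapsTo f (Set.Icc lo hi) (Set.Icc lo hi))
    (a b c : ℝ) (ha : a ∈ Set.Icc lo hi) (hb : b ∈ Set.Icc lo hi) (hc : c ∈ Set.Icc lo hi)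
    (hhs : (f c ≤ a ∧ f a = a ∧ a < b ∧ b < c ∧ c ≤ f b) ∨
      (f c ≥ a ∧ f a = a ∧ a > b ∧ b > c ∧ c ≥ f b)) :
    ∀ ρ : ℚ, 0 < ρ → ρ ≤ 1 / 2 →
      ∃ (x : ℝ) (p q : ℕ), IsCycleIn f (Set.Icc lo hi) x p q ∧
        (p : ℝ) / (q : ℝ) = (ρ : ℝ) := by
  intro ρ hρ0 hρhalf
  set p : ℕ := ρ.num.natAbs with hpdef
  set q : ℕ := ρ.den with hqdef
  have hnum : 0 < ρ.num := Rat.num_pos.mpr hρ0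
  have hp : 0 < p := Int.natAbs_pos.mpr hnum.ne'
  have hco : Nat.Coprime p q := ρ.reduced
  have hpz : (p : ℤ) = ρ.num := Int.natAbs_of_nonneg hnum.le
  have hle2 : 2 * p ≤ q := by
    rw [Rat.le_iff] at hρhalf
    norm_num at hρhalf
    omega
  have hcast : (p : ℝ) / (q : ℝ) = (ρ : ℝ) := by
    rw [Rat.cast_def]
    congr 1
    exact_mod_cast hpz
  rcases hhs with ⟨h1, h2, h3, h4, h5⟩ | ⟨h1, h2, h3, h4, h5⟩
  · obtain ⟨x, hx⟩ := case1 f lo hi hcont a b c ha hc h1 h2 h3 h4 h5 p q hp hle2 hco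
    exact ⟨x, p, q, hx, hcast⟩
  · -- conjugate by negation
    set g : ℝ → ℝ := fun y => -f (-y) with hgdef
    have hmapsneg : MapsTo (fun y : ℝ => -y) (Icc (-hi) (-lo)) (Icc lo hi) := by
      intro y hy
      simp only [mem_Icc] at hy ⊢
      constructor <;> linarith
    have hcontg : ContinuousOn g (Icc (-hi) (-lo)) :=
      (hcont.comp continuous_neg.continuousOn hmapsneg).neg
    have hamem : -a ∈ Icc (-hi) (-lo) := ⟨neg_le_neg ha.2, neg_le_neg ha.1⟩
    have hcmem : -c ∈ Icc (-hi) (-lo) := ⟨neg_le_neg hc.2, neg_le_neg hc.1⟩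
    have hg1 : g (-c) ≤ -a := by simp only [hgdef, neg_neg]; exact neg_le_neg h1
    have hg2 : g (-a) = -a := by simp only [hgdef, neg_neg]; rw [h2]
    have hg3 : -a < -b := neg_lt_neg h3
    have hg4 : -b < -c := neg_lt_neg h4
    have hg5 : -c ≤ g (-b) := by simp only [hgdef, neg_neg]; exact neg_le_neg h5
    obtain ⟨x', hcyc⟩ := case1 g (-hi) (-lo) hcontg (-a) (-b) (-c) hamem hcmem
      hg1 hg2 hg3 hg4 hg5 p q hp hle2 hco
    obtain ⟨hx'mem, hq2, hmperg, hscg⟩ := hcyc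
    have hconj : ∀ (k : ℕ) (y : ℝ), g^[k] y = - f^[k] (-y) := by
      intro k
      induction k with
      | zero => intro y; simp
      | succ k ih =>
        intro y
        rw [Function.iterate_succ_apply', ih, Function.iterate_succ_apply']
        simp only [hgdef, neg_neg]
    have hxmem : -x' ∈ Icc lo hi := by
      simp only [mem_Icc] at hx'mem ⊢
      constructor <;> linarith [hx'mem.1, hx'mem.2]
    have hiter : ∀ k, f^[k] (-x') = - g^[k] x' := by
      intro k
      rw [hconj k x']
      simp
    have hper_iff : ∀ n, Function.IsPeriodicPt f n (-x') ↔ Function.IsPeriodicPt g n x' := by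
      intro n
      have hcj := hconj n x'
      constructor
      · intro h
        show g^[n] x' = x'
        rw [hcj, (h : f^[n] (-x') = -x')]
        simp
      · intro h
        show f^[n] (-x') = -x'
        have h' : -f^[n] (-x') = x' := by rw [← hcj]; exact h
        linarith
    have hmperf : Function.minimalPeriod f (-x') = q := by
      have hgq : Function.IsPeriodicPt g q x' := by
        rw [← hmperg]; exact Function.isPeriodicPt_minimalPeriod g x'
      have hd1 : Function.minimalPeriod f (-x') ∣ q :=
        Function.IsPeriodicPt.minimalPeriod_dvd ((hper_iff q).mpr hgq)
      have hd2 : q ∣ Function.minimalPeriod f (-x') := by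
        rw [← hmperg]
        exact Function.IsPeriodicPt.minimalPeriod_dvd
          ((hper_iff _).mp (Function.isPeriodicPt_minimalPeriod f (-x')))
      exact Nat.dvd_antisymm hd1 hd2
    have hscf : switchCount f (-x') q = 2 * p := by
      rw [← hscg]
      unfold switchCount
      congr 1
      ext i
      simp only [Set.mem_setOf_eq]
      have e : ∀ j : ℕ, (f^[j+1] (-x') - f^[j] (-x')) * (f^[j+2] (-x') - f^[j+1] (-x'))
          = (g^[j+1] x' - g^[j] x') * (g^[j+2] x' - g^[j+1] x') := by
        intro j
        rw [hiter (j+1), hiter j, hiter (j+2)]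
        ring
      rw [e i]
    exact ⟨-x', p, q, ⟨hxmem, hq2, hmperf, hscf⟩, hcast⟩


end OverRotation
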